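/- Let u, κ, τ ∈ ℝ with κ ≠ 0, and suppose u³ + u(κ² + τ² − κτ) + iκτ(κ − τ) ≠ 0. For real N > 0 set θ_N = 2πu/(κN) and b_N = 2πτ/(κN), and define S_N = [sinh(θ_N/2 + iπ/N)·sinh(θ_N/2 − iπ/N + i b_N/2)·sinh(θ_N/2 − i b_N/2)] / [sinh(θ_N/2 − iπ/N)·sinh(θ_N/2 + iπ/N − i b_N/2)·sinh(θ_N/2 + i b_N/2)], using the complex hyperbolic sine. Then S_N converges, as N → ∞, to the rational function value (u³ + u(κ² + τ² − κτ) − iκτ(κ − τ)) / (u³ + u(κ² + τ² − κτ) + iκτ(κ − τ)). In particular, if κ² + τ² − κτ = −12γ and κτ(κ − τ) = 4β², the limit equals the quantised KP S-matrix (u³ − 12γu − 4iβ²)/(u³ − 12γu + 4iβ²). -/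

import Mathlib

set_option linter.unnecessarySimpa false

open Filter in
lemma key_sinh (z : ℂ) : Tendsto (fun N : ℝ => (N:ℂ) * Complex.sinh (z / N)) atTop (nhds z) := by
  by_cases hz : z = 0
  · subst hz
    simpa using (tendsto_const_nhds : Tendsto (fun _ : ℝ => (0:ℂ)) atTop (nhds 0))
  · have h1 : Tendsto (fun N : ℝ => z / (N:ℂ)) atTop (nhdsWithin 0 {(0:ℂ)}ᶜ) := by
      rw [tendsto_nhdsWithin_iff]
      constructor
      · have h0 : Tendsto (fun N : ℝ => ((N:ℂ))⁻¹) atTop (nhds 0) := by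
          have := tendsto_inv_atTop_zero (𝕜 := ℝ)
          have := (Complex.continuous_ofReal.tendsto 0).comp this
          simpa [Function.comp_def, Complex.ofReal_inv] using this
        have := h0.const_mul z
        simpa [div_eq_mul_inv] using this
      · filter_upwards [eventually_ge_atTop (1:ℝ)] with N hN
        have hN0 : (N:ℂ) ≠ 0 := by exact_mod_cast (by linarith : (0:ℝ) < N).ne'
        exact div_ne_zero hz hN0
    have h2 : Tendsto (slope Complex.sinh 0) (nhdsWithin 0 {(0:ℂ)}ᶜ) (nhds 1) := by
      have := hasDerivAt_iff_tendsto_slope.1 (Complex.hasDerivAt_sinh 0)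
      simpa [Complex.cosh_zero] using this
    have h3 := h2.comp h1
    have h4 : Tendsto (fun N : ℝ => z * slope Complex.sinh 0 (z / N)) atTop (nhds z) := by
      simpa using h3.const_mul z
    refine h4.congr' ?_
    filter_upwards [eventually_ge_atTop (1:ℝ)] with N hN
    have hN0 : (N:ℂ) ≠ 0 := by exact_mod_cast (by linarith : (0:ℝ) < N).ne'
    have hw : z / (N:ℂ) ≠ 0 := div_ne_zero hz hN0
    rw [slope_def_field]
    field_simp
    rw [Complex.sinh_zero, sub_zero, mul_zero, sub_zero, mul_div_cancel_left₀ _ hz]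



open Filter

theorem stmt_16 (u κ τ : ℝ) (hκ : κ ≠ 0)
    (hden : (u : ℂ) ^ 3 + (u : ℂ) * ((κ : ℂ) ^ 2 + (τ : ℂ) ^ 2 - (κ : ℂ) * (τ : ℂ))
      + Complex.I * (κ : ℂ) * (τ : ℂ) * ((κ : ℂ) - (τ : ℂ)) ≠ 0) :
    Tendsto
      (fun N : ℝ =>
        (Complex.sinh (((Real.pi * u / (κ * N) : ℝ) : ℂ) + Complex.I * ((Real.pi / N : ℝ) : ℂ))
          * Complex.sinh (((Real.pi * u / (κ * N) : ℝ) : ℂ) - Complex.I * ((Real.pi / N : ℝ) : ℂ)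
              + Complex.I * ((Real.pi * τ / (κ * N) : ℝ) : ℂ))
          * Complex.sinh (((Real.pi * u / (κ * N) : ℝ) : ℂ)
              - Complex.I * ((Real.pi * τ / (κ * N) : ℝ) : ℂ)))
        / (Complex.sinh (((Real.pi * u / (κ * N) : ℝ) : ℂ) - Complex.I * ((Real.pi / N : ℝ) : ℂ))
          * Complex.sinh (((Real.pi * u / (κ * N) : ℝ) : ℂ) + Complex.I * ((Real.pi / N : ℝ) : ℂ)
              - Complex.I * ((Real.pi * τ / (κ * N) : ℝ) : ℂ))
          * Complex.sinh (((Real.pi * u / (κ * N) : ℝ) : ℂ)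
              + Complex.I * ((Real.pi * τ / (κ * N) : ℝ) : ℂ))))
      atTop
      (nhds (((u : ℂ) ^ 3 + (u : ℂ) * ((κ : ℂ) ^ 2 + (τ : ℂ) ^ 2 - (κ : ℂ) * (τ : ℂ))
          - Complex.I * (κ : ℂ) * (τ : ℂ) * ((κ : ℂ) - (τ : ℂ)))
        / ((u : ℂ) ^ 3 + (u : ℂ) * ((κ : ℂ) ^ 2 + (τ : ℂ) ^ 2 - (κ : ℂ) * (τ : ℂ))
          + Complex.I * (κ : ℂ) * (τ : ℂ) * ((κ : ℂ) - (τ : ℂ)))))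
    ∧ ∀ β γ : ℝ, κ ^ 2 + τ ^ 2 - κ * τ = -12 * γ → κ * τ * (κ - τ) = 4 * β ^ 2 →
      ((u : ℂ) ^ 3 + (u : ℂ) * ((κ : ℂ) ^ 2 + (τ : ℂ) ^ 2 - (κ : ℂ) * (τ : ℂ))
          - Complex.I * (κ : ℂ) * (τ : ℂ) * ((κ : ℂ) - (τ : ℂ)))
        / ((u : ℂ) ^ 3 + (u : ℂ) * ((κ : ℂ) ^ 2 + (τ : ℂ) ^ 2 - (κ : ℂ) * (τ : ℂ))
          + Complex.I * (κ : ℂ) * (τ : ℂ) * ((κ : ℂ) - (τ : ℂ)))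
      = ((u : ℂ) ^ 3 - 12 * (γ : ℂ) * (u : ℂ) - 4 * Complex.I * (β : ℂ) ^ 2)
        / ((u : ℂ) ^ 3 - 12 * (γ : ℂ) * (u : ℂ) + 4 * Complex.I * (β : ℂ) ^ 2) := by
  constructor
  · have hκ' : (κ:ℂ) ≠ 0 := by exact_mod_cast hκ
    have hπ : (Real.pi:ℂ) ≠ 0 := by exact_mod_cast Real.pi_ne_zero
    set z1 : ℂ := (Real.pi:ℂ) * u / κ + Complex.I * Real.pi with hz1
    set z2 : ℂ := (Real.pi:ℂ) * u / κ - Complex.I * Real.pi + Complex.I * ((Real.pi:ℂ) * τ / κ) with hz2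
    set z3 : ℂ := (Real.pi:ℂ) * u / κ - Complex.I * ((Real.pi:ℂ) * τ / κ) with hz3
    set z4 : ℂ := (Real.pi:ℂ) * u / κ - Complex.I * Real.pi with hz4
    set z5 : ℂ := (Real.pi:ℂ) * u / κ + Complex.I * Real.pi - Complex.I * ((Real.pi:ℂ) * τ / κ) with hz5
    set z6 : ℂ := (Real.pi:ℂ) * u / κ + Complex.I * ((Real.pi:ℂ) * τ / κ) with hz6
    set Pn : ℂ := (u : ℂ) ^ 3 + (u : ℂ) * ((κ : ℂ) ^ 2 + (τ : ℂ) ^ 2 - (κ : ℂ) * (τ : ℂ))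
            - Complex.I * (κ : ℂ) * (τ : ℂ) * ((κ : ℂ) - (τ : ℂ)) with hPn
    set Pd : ℂ := (u : ℂ) ^ 3 + (u : ℂ) * ((κ : ℂ) ^ 2 + (τ : ℂ) ^ 2 - (κ : ℂ) * (τ : ℂ))
            + Complex.I * (κ : ℂ) * (τ : ℂ) * ((κ : ℂ) - (τ : ℂ)) with hPd
    have I3 : Complex.I ^ 3 = -Complex.I := by
      rw [pow_succ, Complex.I_sq]; ring
    have cancel : ∀ x : ℂ, (κ:ℂ) * (x / κ) = x := fun x => mul_div_cancel₀ x hκ'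
    have w1 : (κ:ℂ) * z1 = Real.pi * u + Complex.I * Real.pi * κ := by
      rw [hz1, mul_add, cancel]; ring
    have w2 : (κ:ℂ) * z2 = Real.pi * u - Complex.I * Real.pi * κ + Complex.I * (Real.pi * τ) := by
      rw [hz2, hz4, mul_add, mul_sub, cancel,
        mul_left_comm (κ:ℂ) Complex.I ((Real.pi:ℂ) * τ / κ), cancel]; ring
    have w3 : (κ:ℂ) * z3 = Real.pi * u - Complex.I * (Real.pi * τ) := by
      rw [hz3, mul_sub, cancel, mul_left_comm (κ:ℂ) Complex.I ((Real.pi:ℂ) * τ / κ), cancel]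
    have w4 : (κ:ℂ) * z4 = Real.pi * u - Complex.I * Real.pi * κ := by
      rw [hz4, mul_sub, cancel]; ring
    have w5 : (κ:ℂ) * z5 = Real.pi * u + Complex.I * Real.pi * κ - Complex.I * (Real.pi * τ) := by
      rw [hz5, mul_sub, mul_add, cancel,
        mul_left_comm (κ:ℂ) Complex.I ((Real.pi:ℂ) * τ / κ), cancel]; ring
    have w6 : (κ:ℂ) * z6 = Real.pi * u + Complex.I * (Real.pi * τ) := by
      rw [hz6, mul_add, cancel, mul_left_comm (κ:ℂ) Complex.I ((Real.pi:ℂ) * τ / κ), cancel]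
    have H1 : (κ:ℂ)^3 * (z1 * z2 * z3) = (Real.pi:ℂ)^3 * Pn := by
      rw [show (κ:ℂ)^3 * (z1 * z2 * z3) = ((κ:ℂ)*z1) * ((κ:ℂ)*z2) * ((κ:ℂ)*z3) by ring,
        w1, w2, w3, hPn]
      ring_nf
      simp only [Complex.I_sq, I3]
      ring
    have H2 : (κ:ℂ)^3 * (z4 * z5 * z6) = (Real.pi:ℂ)^3 * Pd := by
      rw [show (κ:ℂ)^3 * (z4 * z5 * z6) = ((κ:ℂ)*z4) * ((κ:ℂ)*z5) * ((κ:ℂ)*z6) by ring,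
        w4, w5, w6, hPd]
      ring_nf
      simp only [Complex.I_sq, I3]
      ring
    have hc : ((Real.pi:ℂ)/κ)^3 ≠ 0 := pow_ne_zero _ (div_ne_zero hπ hκ')
    have hκ3 : (κ:ℂ)^3 ≠ 0 := pow_ne_zero _ hκ'
    have hπ3 : (Real.pi:ℂ)^3 ≠ 0 := pow_ne_zero _ hπ
    have hd0 : z4 * z5 * z6 ≠ 0 := by
      intro h
      rw [h, mul_zero] at H2
      exact hden (by
        have := H2.symm
        rcases mul_eq_zero.1 this with h' | h'
        · exact absurd h' hπ3
        · exact h')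
    have hT : Tendsto (fun N : ℝ =>
        ((N:ℂ) * Complex.sinh (z1/N) * ((N:ℂ) * Complex.sinh (z2/N)) * ((N:ℂ) * Complex.sinh (z3/N)))
        / ((N:ℂ) * Complex.sinh (z4/N) * ((N:ℂ) * Complex.sinh (z5/N)) * ((N:ℂ) * Complex.sinh (z6/N))))
        atTop (nhds ((z1*z2*z3)/(z4*z5*z6))) :=
      (((key_sinh z1).mul (key_sinh z2)).mul (key_sinh z3)).div
        (((key_sinh z4).mul (key_sinh z5)).mul (key_sinh z6)) hd0
    have hval : (z1*z2*z3)/(z4*z5*z6) = Pn / Pd := by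
      rw [div_eq_div_iff hd0 hden]
      have key : ((κ:ℂ)^3 * (Real.pi:ℂ)^3) * (z1 * z2 * z3 * Pd) = ((κ:ℂ)^3 * (Real.pi:ℂ)^3) * (Pn * (z4 * z5 * z6)) := by
        calc ((κ:ℂ)^3 * (Real.pi:ℂ)^3) * (z1 * z2 * z3 * Pd)
            = ((κ:ℂ)^3 * (z1 * z2 * z3)) * ((Real.pi:ℂ)^3 * Pd) := by ring
          _ = ((Real.pi:ℂ)^3 * Pn) * ((κ:ℂ)^3 * (z4 * z5 * z6)) := by rw [H1, ← H2]
          _ = ((κ:ℂ)^3 * (Real.pi:ℂ)^3) * (Pn * (z4 * z5 * z6)) := by ring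
      exact mul_left_cancel₀ (mul_ne_zero hκ3 hπ3) key
    rw [← hval]
    refine hT.congr' ?_
    filter_upwards [eventually_ge_atTop (1:ℝ)] with N hN
    have hN0 : (N:ℂ) ≠ 0 := by exact_mod_cast (by linarith : (0:ℝ) < N).ne'
    have e1 : z1 / N = ((Real.pi * u / (κ * N) : ℝ) : ℂ) + Complex.I * ((Real.pi / N : ℝ) : ℂ) := by
      rw [hz1]; push_cast; ring
    have e2 : z2 / N = ((Real.pi * u / (κ * N) : ℝ) : ℂ) - Complex.I * ((Real.pi / N : ℝ) : ℂ)
        + Complex.I * ((Real.pi * τ / (κ * N) : ℝ) : ℂ) := by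
      rw [hz2]; push_cast; ring
    have e3 : z3 / N = ((Real.pi * u / (κ * N) : ℝ) : ℂ)
        - Complex.I * ((Real.pi * τ / (κ * N) : ℝ) : ℂ) := by
      rw [hz3]; push_cast; ring
    have e4 : z4 / N = ((Real.pi * u / (κ * N) : ℝ) : ℂ) - Complex.I * ((Real.pi / N : ℝ) : ℂ) := by
      rw [hz4]; push_cast; ring
    have e5 : z5 / N = ((Real.pi * u / (κ * N) : ℝ) : ℂ) + Complex.I * ((Real.pi / N : ℝ) : ℂ)
        - Complex.I * ((Real.pi * τ / (κ * N) : ℝ) : ℂ) := by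
      rw [hz5]; push_cast; ring
    have e6 : z6 / N = ((Real.pi * u / (κ * N) : ℝ) : ℂ)
        + Complex.I * ((Real.pi * τ / (κ * N) : ℝ) : ℂ) := by
      rw [hz6]; push_cast; ring
    rw [e1, e2, e3, e4, e5, e6]
    rw [show ∀ a b c : ℂ, (N:ℂ) * a * ((N:ℂ) * b) * ((N:ℂ) * c) = (N:ℂ)^3 * (a * b * c)
      from fun a b c => by ring, show ∀ a b c : ℂ, (N:ℂ) * a * ((N:ℂ) * b) * ((N:ℂ) * c)
        = (N:ℂ)^3 * (a * b * c) from fun a b c => by ring,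
      mul_div_mul_left _ _ (pow_ne_zero 3 hN0)]
  · intro β γ h1 h2
    have h1' : (κ:ℂ) ^ 2 + (τ:ℂ) ^ 2 - (κ:ℂ) * τ = -12 * (γ:ℂ) := by exact_mod_cast h1
    have h2' : (κ:ℂ) * τ * ((κ:ℂ) - τ) = 4 * (β:ℂ) ^ 2 := by exact_mod_cast h2
    congr 1
    · linear_combination (u:ℂ) * h1' - Complex.I * h2'
    · linear_combination (u:ℂ) * h1' + Complex.I * h2'
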